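/- Let G be a connected simple graph on a finite vertex set V such that for every vertex x, the subgraph of G induced on V \ {x} is connected (no single vertex disconnects G). Then for all vertices u and v, 2·dist(u,v) ≤ |V|; i.e., the diameter of such a graph is at most half the number of vertices. -/

import Mathlib

/-- On any walk from `u` to `v`, every distance value `i` with `1 ≤ i ≤ dist u v`
is attained by some vertex of the walk. -/
lemma exists_mem_support_dist_eq {V : Type*} {G : SimpleGraph V} (hG : G.Connected)
    {u v : V} (w : G.Walk u v) {i : ℕ} (h1 : 1 ≤ i) (h2 : i ≤ G.dist u v) :
    ∃ y ∈ w.support, G.dist u y = i := by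
  obtain ⟨e, he, hfst, hsnd⟩ := w.exists_boundary_dart {z | G.dist u z < i}
    (by simp only [Set.mem_setOf_eq, SimpleGraph.dist_self]; omega)
    (by simp only [Set.mem_setOf_eq]; omega)
  refine ⟨e.snd, w.dart_snd_mem_support_of_mem_darts he, le_antisymm ?_ ?_⟩
  · calc G.dist u e.snd ≤ G.dist u e.fst + G.dist e.fst e.snd := hG.dist_triangle
      _ ≤ (i - 1) + 1 := by
          have h1' : G.dist e.fst e.snd = 1 := SimpleGraph.dist_eq_one_iff_adj.mpr e.adj
          have := hfst
          simp only [Set.mem_setOf_eq] at this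
          omega
      _ = i := by omega
  · simpa using hsnd

theorem two_mul_dist_le_card {V : Type*} [Fintype V] (G : SimpleGraph V)
    (hG : G.Connected)
    (h : ∀ x : V, (G.induce ({x}ᶜ : Set V)).Connected) (u v : V) :
    2 * G.dist u v ≤ Fintype.card V := by
  classical
  set d := G.dist u v with hd
  rcases Nat.eq_zero_or_pos d with h0 | hdpos
  · simp [h0]
  set L : ℕ → Finset V := fun i => Finset.univ.filter (fun x => G.dist u x = i) with hL
  -- each intermediate layer contains at least two vertices
  have key : ∀ i, 1 ≤ i → i ≤ d - 1 → ∀ x : V, ∃ y, y ≠ x ∧ G.dist u y = i := by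
    intro i hi1 hi2 x
    by_cases hx : G.dist u x = i
    · -- use the no-cut-vertex hypothesis
      have hux : u ≠ x := fun huv => by
        rw [← huv, SimpleGraph.dist_self] at hx; omega
      have hvx : v ≠ x := fun hvv => by
        rw [← hvv] at hx; rw [← hd] at hx; omega
      have hu' : u ∈ ({x}ᶜ : Set V) := by simpa using hux
      have hv' : v ∈ ({x}ᶜ : Set V) := by simpa using hvx
      obtain ⟨q⟩ := (h x) ⟨u, hu'⟩ ⟨v, hv'⟩
      let w : G.Walk u v := q.map (SimpleGraph.Embedding.induce ({x}ᶜ : Set V)).toHom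
      obtain ⟨y, hy, hyd⟩ := exists_mem_support_dist_eq hG w hi1 (by omega)
      refine ⟨y, ?_, hyd⟩
      intro hyx
      rw [show w.support = _ from SimpleGraph.Walk.support_map _ _] at hy
      obtain ⟨z, hz, hzy⟩ := List.mem_map.mp hy
      have hzx : (z : V) = y := hzy
      exact z.2 (by simp [hzx, hyx])
    · -- x is not in the layer; any vertex of the layer works
      obtain ⟨p⟩ := hG u v
      obtain ⟨y, _, hyd⟩ := exists_mem_support_dist_eq hG p hi1 (by omega)
      exact ⟨y, fun hxy => hx (hxy ▸ hyd), hyd⟩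
  have hL2 : ∀ i, 1 ≤ i → i ≤ d - 1 → 2 ≤ (L i).card := by
    intro i hi1 hi2
    obtain ⟨a, _, ha⟩ := key i hi1 hi2 u
    obtain ⟨b, hba, hb⟩ := key i hi1 hi2 a
    exact Finset.one_lt_card.mpr
      ⟨a, by simp [hL, ha], b, by simp [hL, hb], fun hab => hba hab.symm⟩
  have hL0 : 1 ≤ (L 0).card :=
    Finset.card_pos.mpr ⟨u, by simp [hL, SimpleGraph.dist_self]⟩
  have hLd : 1 ≤ (L d).card :=
    Finset.card_pos.mpr ⟨v, by simp [hL, hd]⟩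
  -- layers are pairwise disjoint
  have hdisj : ((Finset.range (d + 1) : Finset ℕ) : Set ℕ).PairwiseDisjoint L := by
    intro i _ j _ hij
    simp only [Finset.disjoint_left, hL]
    intro a ha hb
    simp only [Finset.mem_filter] at ha hb
    exact hij (ha.2 ▸ hb.2.symm ▸ rfl)
  have hsum : ∑ i ∈ Finset.range (d + 1), (L i).card ≤ Fintype.card V := by
    rw [← Finset.card_biUnion (fun i hi j hj hij => hdisj hi hj hij)]
    exact Finset.card_le_card (Finset.subset_univ _)
  have hsplit : ∑ i ∈ Finset.range (d + 1), (L i).card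
      = (∑ i ∈ Finset.range (d - 1), (L (i + 1)).card) + (L 0).card + (L d).card := by
    rw [Finset.sum_range_succ]
    congr 1
    have hde : d = (d - 1) + 1 := by omega
    conv_lhs => rw [hde]
    exact Finset.sum_range_succ' _ _
  have hmid : (d - 1) * 2 ≤ ∑ i ∈ Finset.range (d - 1), (L (i + 1)).card := by
    calc (d - 1) * 2 = (Finset.range (d - 1)).card • 2 := by simp [mul_comm]
      _ ≤ _ := Finset.card_nsmul_le_sum _ _ _ (fun i hi => by
          exact hL2 (i + 1) (by omega) (by have := Finset.mem_range.mp hi; omega))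
  omega
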